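/- Let ε ∈ (0,1) and set α = ε·√((1−ε)²(1+ε−ε²)/(1+ε)) = ε/√f(ε). Then for all k₂ > 0, h(k₂) = k₂²/(k₂²+α²) + (α²/(k₂²+α²))·1{k₂ ≤ 2ε/(1−ε)}·((1+ε)/(1+k₂) − (1−ε))/(2ε) ≥ 3/4. -/

import Mathlib

open MeasureTheory ProbabilityTheory Real

/-- The uniform probability measure on the interval `[a, b]`. -/
noncomputable def uniformIcc (a b : ℝ) : Measure ℝ :=
  (ENNReal.ofReal (b - a))⁻¹ • (MeasureTheory.volume.restrict (Set.Icc a b))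

/-- The median of `2*n+1` real values: their `(n+1)`-st smallest value. -/
noncomputable def medianOf {n : ℕ} (v : Fin (2 * n + 1) → ℝ) : ℝ :=
  (Multiset.sort (↑(List.ofFn v)) (· ≤ ·)).get ⟨n, by simp; omega⟩

/-- The nuisance factor `f(ε) = (1+ε)/((1-ε)² (1+ε-ε²))`. -/
noncomputable def nuisance (ε : ℝ) : ℝ := (1 + ε) / ((1 - ε) ^ 2 * (1 + ε - ε ^ 2))

/-- The function `h(k₂) = k₂²/(k₂²+α²) + (α²/(k₂²+α²))·1{k₂ ≤ 2ε/(1−ε)}·((1+ε)/(1+k₂) − (1−ε))/(2ε)`. -/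
noncomputable def hFun (ε α k₂ : ℝ) : ℝ :=
  k₂ ^ 2 / (k₂ ^ 2 + α ^ 2) +
    α ^ 2 / (k₂ ^ 2 + α ^ 2) *
      (if k₂ ≤ 2 * ε / (1 - ε) then ((1 + ε) / (1 + k₂) - (1 - ε)) / (2 * ε) else 0)

set_option maxHeartbeats 2000000 in
/-- For `ε ∈ (0,1)` and `α = ε·√((1−ε)²(1+ε−ε²)/(1+ε)) = ε/√f(ε)`,
one has `h(k₂) ≥ 3/4` for all `k₂ > 0`. -/
theorem hFun_ge_three_quarters (ε α : ℝ) (hε : ε ∈ Set.Ioo (0 : ℝ) 1)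
    (hα : α = ε * Real.sqrt ((1 - ε) ^ 2 * (1 + ε - ε ^ 2) / (1 + ε)))
    (k₂ : ℝ) (hk : 0 < k₂) :
    3 / 4 ≤ hFun ε α k₂ := by
  obtain ⟨he0, he1⟩ := hε
  have h1e : (0:ℝ) < 1 - ε := by linarith
  have h1pe : (0:ℝ) < 1 + ε := by linarith
  have hB : (0:ℝ) < 1 + ε - ε ^ 2 := by nlinarith [mul_pos he0 h1e]
  have hA : (0:ℝ) < (1 - ε) ^ 2 * (1 + ε - ε ^ 2) := by positivity
  have hα2 : α ^ 2 = ε ^ 2 * ((1 - ε) ^ 2 * (1 + ε - ε ^ 2)) / (1 + ε) := by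
    rw [hα, mul_pow, Real.sq_sqrt (by positivity)]
    ring
  have hD : (0:ℝ) < k₂ ^ 2 + α ^ 2 := by positivity
  rw [hFun]
  split_ifs with hif
  · have hk1 : (0:ℝ) < 1 + k₂ := by linarith
    have e1 : k₂ ^ 2 / (k₂ ^ 2 + α ^ 2) +
        α ^ 2 / (k₂ ^ 2 + α ^ 2) * (((1 + ε) / (1 + k₂) - (1 - ε)) / (2 * ε)) =
        (k₂ ^ 2 * (2 * ε * (1 + k₂)) + α ^ 2 * ((1 + ε) - (1 - ε) * (1 + k₂))) /
          ((k₂ ^ 2 + α ^ 2) * (2 * ε * (1 + k₂))) := by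
      field_simp
    have hg : 0 ≤ 4 * (1 + ε) - (1 - ε) ^ 2 * (1 + ε - ε ^ 2) * (2 + ε) ^ 2 := by
      nlinarith [mul_pos he0 he0, mul_pos (mul_pos he0 he0) he0,
        mul_pos (mul_pos (mul_pos he0 he0) he0) he0,
        mul_pos (mul_pos (mul_pos (mul_pos he0 he0) he0) he0) he0]
    have hP : 0 ≤ (1 + ε) * (k₂ ^ 3 + k₂ ^ 2) -
        ε * ((1 - ε) ^ 2 * (1 + ε - ε ^ 2)) * ((2 + ε) * k₂ - ε) := by
      have key : 4 * (1 + ε) * ((1 + ε) * (k₂ ^ 3 + k₂ ^ 2) -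
          ε * ((1 - ε) ^ 2 * (1 + ε - ε ^ 2)) * ((2 + ε) * k₂ - ε)) =
          4 * (1 + ε) ^ 2 * k₂ ^ 3 +
            (2 * (1 + ε) * k₂ - ε * ((1 - ε) ^ 2 * (1 + ε - ε ^ 2)) * (2 + ε)) ^ 2 +
            ε ^ 2 * ((1 - ε) ^ 2 * (1 + ε - ε ^ 2)) *
              (4 * (1 + ε) - (1 - ε) ^ 2 * (1 + ε - ε ^ 2) * (2 + ε) ^ 2) := by
        ring
      have t1 : (0:ℝ) ≤ 4 * (1 + ε) ^ 2 * k₂ ^ 3 := by positivity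
      have t2 : (0:ℝ) ≤
          (2 * (1 + ε) * k₂ - ε * ((1 - ε) ^ 2 * (1 + ε - ε ^ 2)) * (2 + ε)) ^ 2 :=
        sq_nonneg _
      have t3 : (0:ℝ) ≤ ε ^ 2 * ((1 - ε) ^ 2 * (1 + ε - ε ^ 2)) *
          (4 * (1 + ε) - (1 - ε) ^ 2 * (1 + ε - ε ^ 2) * (2 + ε) ^ 2) := by
        have : (0:ℝ) ≤ ε ^ 2 * ((1 - ε) ^ 2 * (1 + ε - ε ^ 2)) := by positivity
        exact mul_nonneg this hg
      nlinarith [key, t1, t2, t3]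
    have main : 3 / 4 * ((k₂ ^ 2 + α ^ 2) * (2 * ε * (1 + k₂))) ≤
        k₂ ^ 2 * (2 * ε * (1 + k₂)) + α ^ 2 * (1 + ε - (1 - ε) * (1 + k₂)) := by
      rw [← sub_nonneg]
      have expand : k₂ ^ 2 * (2 * ε * (1 + k₂)) + α ^ 2 * (1 + ε - (1 - ε) * (1 + k₂)) -
          3 / 4 * ((k₂ ^ 2 + α ^ 2) * (2 * ε * (1 + k₂))) =
          ε / (2 * (1 + ε)) * ((1 + ε) * (k₂ ^ 3 + k₂ ^ 2) -
            ε * ((1 - ε) ^ 2 * (1 + ε - ε ^ 2)) * ((2 + ε) * k₂ - ε)) := by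
        rw [hα2]
        field_simp
        ring
      rw [expand]
      exact mul_nonneg (by positivity) hP
    rw [e1, le_div_iff₀ (by positivity)]
    exact main
  · push_neg at hif
    have hk2e : 2 * ε < k₂ * (1 - ε) := by
      rw [div_lt_iff₀ h1e] at hif
      linarith
    -- need k₂^2 ≥ 3 α^2
    have key : 3 * α ^ 2 ≤ k₂ ^ 2 := by
      rw [hα2, ← mul_div_assoc, div_le_iff₀ h1pe]
      have h4 : 4 * ε ^ 2 < k₂ ^ 2 * (1 - ε) ^ 2 := by nlinarith [mul_pos he0 hk]
      have hA4 : 3 * ((1 - ε) ^ 2 * (1 + ε - ε ^ 2)) ≤ 4 := by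
        nlinarith [sq_nonneg (1 - ε), sq_nonneg (ε * (1 - ε)), mul_pos he0 he0,
          mul_nonneg (mul_nonneg he0.le he0.le) he0.le]
      have hA4' : 3 * (ε ^ 2 * ((1 - ε) ^ 2 * (1 + ε - ε ^ 2))) ≤ 4 * ε ^ 2 := by
        nlinarith [mul_le_mul_of_nonneg_left hA4 (sq_nonneg ε)]
      have hk4 : k₂ ^ 2 * (1 - ε) ^ 2 ≤ k₂ ^ 2 * (1 + ε) := by
        nlinarith [mul_nonneg (sq_nonneg k₂) (mul_nonneg he0.le (by linarith : (0:ℝ) ≤ 3 - ε))]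
      linarith
    rw [mul_zero, add_zero, le_div_iff₀ hD]
    linarith
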